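/- With vertex labels defined from T_s, a non-tree edge (x, y) belongs to C'(v_i) (i.e., x ∈ T_1(v_i) and y ∈ T_2(v_i)) if and only if label(x) < i and label(y) > i. Consequently the sets C''(v_i) for distinct internal vertices v_i are pairwise disjoint. -/

import Mathlib

open Classical SimpleGraph

noncomputable section

variable {V : Type*}

/-- Total weight of a walk, summing `w` over its darts. -/
def walkWeight (G : SimpleGraph V) (w : V → V → ℝ) {u v : V} (p : G.Walk u v) : ℝ :=
  (p.darts.map fun d => w d.fst d.snd).sum

/-- Weighted shortest-path distance: infimum of walk weights. -/
def wdist (G : SimpleGraph V) (w : V → V → ℝ) (u v : V) : ℝ :=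
  sInf {r | ∃ p : G.Walk u v, walkWeight G w p = r}

/-- The graph obtained by deleting a set of vertices (kept on the same vertex type). -/
def delVerts (G : SimpleGraph V) (S : Set V) : SimpleGraph V where
  Adj a b := G.Adj a b ∧ a ∉ S ∧ b ∉ S
  symm := ⟨fun a b h => ⟨h.1.symm, h.2.2, h.2.1⟩⟩
  loopless := ⟨fun a h => G.irrefl h.1⟩

/-- `u` is in the subtree of `T` rooted at the `k`-th vertex of the path `vp`. -/
def inSub (T : SimpleGraph V) (vp : ℕ → V) (k : ℕ) (u : V) : Prop :=
  k = 0 ∨ (T.deleteEdges {s(vp (k-1), vp k)}).Reachable (vp k) u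

/-- The label of a vertex: the largest `k ≤ l` with `u` in the subtree rooted at `vp k`. -/
def label (T : SimpleGraph V) (vp : ℕ → V) (l : ℕ) (u : V) : ℕ :=
  sSup {k | k ≤ l ∧ inSub T vp k u}

lemma delVerts_adj {G : SimpleGraph V} {S : Set V} {a b : V} :
    (delVerts G S).Adj a b ↔ G.Adj a b ∧ a ∉ S ∧ b ∉ S := Iff.rfl

lemma delVerts_le_deleteEdges {T : SimpleGraph V} {v : V} {e : Sym2 V} (hv : v ∈ e) :
    delVerts T {v} ≤ T.deleteEdges {e} := by
  intro a b hab
  rw [deleteEdges_adj]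
  refine ⟨hab.1, ?_⟩
  simp only [Set.mem_singleton_iff]
  rintro rfl
  rcases Sym2.mem_iff.mp hv with rfl | rfl
  · exact hab.2.1 rfl
  · exact hab.2.2 rfl

lemma reachable_delVerts_of_walk {G T : SimpleGraph V} {v a u : V} (W : G.Walk a u)
    (hle : G ≤ T) (hs : v ∉ W.support) : (delVerts T {v}).Reachable a u := by
  induction W with
  | nil => exact Reachable.refl _
  | @cons a b c h q ih =>
    rw [Walk.support_cons, List.mem_cons] at hs
    push_neg at hs
    refine (Adj.reachable (delVerts_adj.mpr ⟨hle h, ?_, ?_⟩)).trans (ih hs.2)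
    · exact fun hh => hs.1 (Set.mem_singleton_iff.mp hh).symm
    · exact fun hh => hs.2 ((Set.mem_singleton_iff.mp hh) ▸ q.start_mem_support)

lemma tree_bridge {T : SimpleGraph V} (hT : T.IsTree) {c v : V} (h : T.Adj c v) :
    ¬ (T.deleteEdges {s(c, v)}).Reachable c v :=
  ((isBridge_iff).mp ((isAcyclic_iff_forall_adj_isBridge.mp hT.2) h))

lemma reachable_delVerts_of_deleteEdges {T : SimpleGraph V} (hT : T.IsTree) {c v u : V}
    (hcv : T.Adj c v) (h : (T.deleteEdges {s(c, v)}).Reachable c u) :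
    (delVerts T {v}).Reachable c u := by
  classical
  obtain ⟨W⟩ := h
  by_cases hvs : v ∈ W.support
  · exact absurd ⟨W.takeUntil v hvs⟩ (tree_bridge hT hcv)
  · exact reachable_delVerts_of_walk W (deleteEdges_le _) hvs

lemma reachable_deleteEdges_tri {G : SimpleGraph V} {c d a u : V} (W : G.Walk a u) :
    (G.deleteEdges {s(c, d)}).Reachable a u ∨ (G.deleteEdges {s(c, d)}).Reachable c u ∨
      (G.deleteEdges {s(c, d)}).Reachable d u := by
  induction W with
  | nil => exact Or.inl (Reachable.refl _)
  | @cons a b _ h q ih =>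
    rcases ih with ih | ih | ih
    · by_cases he : s(a, b) = s(c, d)
      · rcases Sym2.eq_iff.mp he with ⟨rfl, rfl⟩ | ⟨rfl, rfl⟩
        · exact Or.inr (Or.inr ih)
        · exact Or.inr (Or.inl ih)
      · refine Or.inl ((Adj.reachable ?_).trans ih)
        rw [deleteEdges_adj]
        exact ⟨h, by simpa using he⟩
    · exact Or.inr (Or.inl ih)
    · exact Or.inr (Or.inr ih)

lemma getVert_mem_support' {G : SimpleGraph V} {a u : V} (W : G.Walk a u) (j : ℕ) :
    W.getVert j ∈ W.support := by
  induction W generalizing j with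
  | nil => cases j <;> simp [Walk.getVert]
  | cons h q ih =>
    cases j with
    | zero => simp [Walk.getVert]
    | succ n => rw [Walk.getVert_cons_succ, Walk.support_cons]; exact List.mem_cons_of_mem _ (ih n)

lemma edge_getVert_mem' {G : SimpleGraph V} {a u : V} (W : G.Walk a u) {j : ℕ}
    (hj : j < W.length) : s(W.getVert j, W.getVert (j + 1)) ∈ W.edges := by
  induction W generalizing j with
  | nil => simp at hj
  | @cons a b c h q ih =>
    cases j with
    | zero =>
      rw [Walk.edges_cons]
      have : (q.cons h).getVert 1 = b := (Walk.getVert_cons_succ (n := 0) q h).trans q.getVert_zero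
      rw [Walk.getVert_zero, this]
      exact List.mem_cons_self
    | succ n =>
      rw [Walk.getVert_cons_succ, Walk.getVert_cons_succ, Walk.edges_cons]
      exact List.mem_cons_of_mem _ (ih (by simpa [Walk.length_cons] using hj))

lemma IsPath.getVert_inj' {G : SimpleGraph V} {a u : V} {W : G.Walk a u} (hW : W.IsPath) :
    ∀ j k, j ≤ W.length → k ≤ W.length → W.getVert j = W.getVert k → j = k := by
  induction W with
  | nil => intro j k hj hk _; simp only [Walk.length_nil, Nat.le_zero] at hj hk; omega
  | @cons a b c h q ih =>
    rw [Walk.cons_isPath_iff] at hW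
    intro j k hj hk heq
    cases j with
    | zero =>
      cases k with
      | zero => rfl
      | succ n =>
        rw [Walk.getVert_zero, Walk.getVert_cons_succ] at heq
        exact absurd (heq ▸ getVert_mem_support' q n) hW.2
    | succ m =>
      cases k with
      | zero =>
        rw [Walk.getVert_zero, Walk.getVert_cons_succ] at heq
        exact absurd (heq ▸ getVert_mem_support' q m) hW.2
      | succ n =>
        rw [Walk.getVert_cons_succ, Walk.getVert_cons_succ] at heq
        have := ih hW.1 m n (by simpa [Walk.length_cons] using hj)
          (by simpa [Walk.length_cons] using hk) heq
        omega

section Main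

variable {T : SimpleGraph V} {vp : ℕ → V} {l : ℕ}

lemma lemB (hT : T.IsTree) (hadj : ∀ j, j < l → T.Adj (vp j) (vp (j + 1)))
    {i : ℕ} (hil : i + 1 ≤ l) (u : V) :
    (delVerts T {vp i}).Reachable (vp (i + 1)) u ↔ inSub T vp (i + 1) u := by
  have hins : inSub T vp (i + 1) u ↔
      (T.deleteEdges {s(vp i, vp (i + 1))}).Reachable (vp (i + 1)) u := by
    unfold inSub
    simp
  rw [hins]
  constructor
  · intro h
    exact h.mono (delVerts_le_deleteEdges (by simp))
  · intro h
    have hsw : ({s(vp i, vp (i + 1))} : Set (Sym2 V)) = {s(vp (i + 1), vp i)} := by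
      rw [Sym2.eq_swap]
    rw [hsw] at h
    exact reachable_delVerts_of_deleteEdges hT (hadj i (by omega)).symm h

lemma lemA (hT : T.IsTree) (hadj : ∀ j, j < l → T.Adj (vp j) (vp (j + 1)))
    (hinj : ∀ j k, j ≤ l → k ≤ l → vp j = vp k → j = k)
    {i : ℕ} (hi1 : 1 ≤ i) (hil : i + 1 ≤ l) (u : V) :
    (delVerts T {vp i}).Reachable (vp 0) u ↔ ¬ inSub T vp i u := by
  obtain ⟨m, rfl⟩ : ∃ m, i = m + 1 := ⟨i - 1, by omega⟩
  have hbr : ¬ (T.deleteEdges {s(vp m, vp (m + 1))}).Reachable (vp m) (vp (m + 1)) :=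
    tree_bridge hT (hadj m (by omega))
  have hpre : ∀ j, j ≤ m → (T.deleteEdges {s(vp m, vp (m + 1))}).Reachable (vp 0) (vp j) := by
    intro j
    induction j with
    | zero => intro _; exact Reachable.refl _
    | succ n ih =>
      intro hn
      refine (ih (by omega)).trans (Adj.reachable ?_)
      rw [deleteEdges_adj]
      refine ⟨hadj n (by omega), ?_⟩
      simp only [Set.mem_singleton_iff]
      intro he
      rcases Sym2.eq_iff.mp he with ⟨h1, h2⟩ | ⟨h1, h2⟩
      · have := hinj n m (by omega) (by omega) h1; omega
      · have := hinj n (m + 1) (by omega) (by omega) h1; omega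
  constructor
  · intro hr hsub
    have hsub' : (T.deleteEdges {s(vp m, vp (m + 1))}).Reachable (vp (m + 1)) u := by
      rcases hsub with h0 | h
      · omega
      · exact h
    have hs_u : (T.deleteEdges {s(vp m, vp (m + 1))}).Reachable (vp 0) u :=
      hr.mono (delVerts_le_deleteEdges (by simp))
    exact hbr ((hpre m le_rfl).symm.trans (hs_u.trans hsub'.symm))
  · intro hnsub
    have hnr : ¬ (T.deleteEdges {s(vp m, vp (m + 1))}).Reachable (vp (m + 1)) u :=
      fun h => hnsub (Or.inr h)
    obtain ⟨W⟩ := hT.1.preconnected (vp m) u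
    have h : (T.deleteEdges {s(vp m, vp (m + 1))}).Reachable (vp m) u := by
      rcases reachable_deleteEdges_tri (c := vp m) (d := vp (m + 1)) W with h | h | h
      · exact h
      · exact h
      · exact absurd h hnr
    have h1 : (delVerts T {vp (m + 1)}).Reachable (vp m) u :=
      reachable_delVerts_of_deleteEdges hT (hadj m (by omega)) h
    have h2 : (delVerts T {vp (m + 1)}).Reachable (vp m) (vp 0) :=
      reachable_delVerts_of_deleteEdges hT (hadj m (by omega)) (hpre m le_rfl).symm
    exact h2.symm.trans h1

lemma inSub_down (hT : T.IsTree) (hadj : ∀ j, j < l → T.Adj (vp j) (vp (j + 1)))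
    (hinj : ∀ j k, j ≤ l → k ≤ l → vp j = vp k → j = k)
    {k : ℕ} (hk : k + 1 ≤ l) (u : V)
    (h : inSub T vp (k + 1) u) : inSub T vp k u := by
  rcases Nat.eq_zero_or_pos k with rfl | hk0
  · exact Or.inl rfl
  · have hB := (lemB hT hadj (i := k) hk u).mpr h
    have h2 : (T.deleteEdges {s(vp (k - 1), vp k)}).Reachable (vp (k + 1)) u :=
      hB.mono (delVerts_le_deleteEdges (by simp))
    refine Or.inr ((Adj.reachable ?_).trans h2)
    rw [deleteEdges_adj]
    refine ⟨hadj k (by omega), ?_⟩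
    simp only [Set.mem_singleton_iff]
    intro he
    rcases Sym2.eq_iff.mp he with ⟨h1, h2'⟩ | ⟨h1, h2'⟩
    · have := hinj k (k - 1) (by omega) (by omega) h1; omega
    · have := hinj (k + 1) (k - 1) (by omega) (by omega) h2'; omega

lemma lab_iff (hT : T.IsTree) (hadj : ∀ j, j < l → T.Adj (vp j) (vp (j + 1)))
    (hinj : ∀ j k, j ≤ l → k ≤ l → vp j = vp k → j = k)
    {m : ℕ} (hm : m ≤ l) (u : V) :
    inSub T vp m u ↔ m ≤ label T vp l u := by
  have hbdd : BddAbove {k | k ≤ l ∧ inSub T vp k u} := ⟨l, fun k hk => hk.1⟩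
  have h0 : 0 ∈ {k | k ≤ l ∧ inSub T vp k u} := ⟨Nat.zero_le _, Or.inl rfl⟩
  have hmem := Nat.sSup_mem ⟨0, h0⟩ hbdd
  have hdown : ∀ k, k ≤ l → inSub T vp k u → ∀ j, j ≤ k → inSub T vp j u := by
    intro k
    induction k with
    | zero =>
      intro _ h j hj
      obtain rfl := Nat.le_zero.mp hj
      exact h
    | succ n ih =>
      intro hk h j hj
      rcases Nat.lt_or_ge j (n + 1) with hlt | hge
      · exact ih (by omega) (inSub_down hT hadj hinj hk u h) j (by omega)
      · have hje : j = n + 1 := by omega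
        exact hje ▸ h
  constructor
  · intro h
    exact le_csSup hbdd ⟨hm, h⟩
  · intro h
    exact hdown _ hmem.1 hmem.2 m h

end Main

theorem stmt18 {V : Type*}
    (G : SimpleGraph V) (hconn : G.Connected) (w : V → V → ℝ)
    (hw : ∀ a b, G.Adj a b → 0 < w a b) (hws : ∀ a b, w a b = w b a)
    (s t : V) (p : G.Walk s t) (hp : p.IsPath)
    (hps : walkWeight G w p = wdist G w s t)
    (T : SimpleGraph V) (hTG : T ≤ G) (hT : T.IsTree)
    (hSPT : ∀ v, wdist T w s v = wdist G w s v)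
    (hPT : ∀ e ∈ p.edges, e ∈ T.edgeSet)
    (i : ℕ) (hi1 : 1 ≤ i) (hil : i + 1 ≤ p.length)
    (x y : V) (hxy : G.Adj x y) (hnt : s(x, y) ∉ T.edgeSet) :
    (((delVerts T {p.getVert i}).Reachable s x ∧
      (delVerts T {p.getVert i}).Reachable (p.getVert (i+1)) y) ↔
     (label T p.getVert p.length x < i ∧ i < label T p.getVert p.length y)) ∧
    (∀ i₁ i₂ : ℕ, 1 ≤ i₁ → i₁ + 1 ≤ p.length → 1 ≤ i₂ → i₂ + 1 ≤ p.length → i₁ ≠ i₂ →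
      ∀ e : Sym2 V,
        ¬ ((e ≠ s(p.getVert i₁, p.getVert (i₁+1)) ∧ ∃ a b, e = s(a, b) ∧ G.Adj a b ∧
            (a ≠ p.getVert i₁ ∧ ¬ (delVerts T {p.getVert i₁}).Reachable s a ∧
              ¬ (delVerts T {p.getVert i₁}).Reachable (p.getVert (i₁+1)) a) ∧
            (delVerts T {p.getVert i₁}).Reachable (p.getVert (i₁+1)) b) ∧
          (e ≠ s(p.getVert i₂, p.getVert (i₂+1)) ∧ ∃ a b, e = s(a, b) ∧ G.Adj a b ∧
            (a ≠ p.getVert i₂ ∧ ¬ (delVerts T {p.getVert i₂}).Reachable s a ∧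
              ¬ (delVerts T {p.getVert i₂}).Reachable (p.getVert (i₂+1)) a) ∧
            (delVerts T {p.getVert i₂}).Reachable (p.getVert (i₂+1)) b))) := by
  have hadj : ∀ j, j < p.length → T.Adj (p.getVert j) (p.getVert (j + 1)) := fun j hj =>
    T.mem_edgeSet.mp (hPT _ (edge_getVert_mem' p hj))
  have hinj := IsPath.getVert_inj' hp
  have hs0 : p.getVert 0 = s := p.getVert_zero
  have key : ∀ i : ℕ, 1 ≤ i → i + 1 ≤ p.length → ∀ u,
      ((delVerts T {p.getVert i}).Reachable s u ↔ label T p.getVert p.length u < i) ∧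
      ((delVerts T {p.getVert i}).Reachable (p.getVert (i + 1)) u ↔
        i < label T p.getVert p.length u) := by
    intro i h1 h2 u
    constructor
    · have hA := lemA hT hadj hinj h1 h2 u
      rw [hs0] at hA
      rw [hA, lab_iff hT hadj hinj (by omega : i ≤ p.length) u]
      omega
    · rw [lemB hT hadj h2 u, lab_iff hT hadj hinj h2 u]
      omega
  refine ⟨and_congr ((key i hi1 hil x).1) ((key i hi1 hil y).2), ?_⟩
  rintro i₁ i₂ h11 h12 h21 h22 hne e
    ⟨⟨-, a₁, b₁, he1, -, ⟨-, hna1, hna1'⟩, hb1⟩, ⟨-, a₂, b₂, he2, -, ⟨-, hna2, hna2'⟩, hb2⟩⟩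
  have la1 : label T p.getVert p.length a₁ = i₁ := by
    have hx := (key i₁ h11 h12 a₁).1
    have hy := (key i₁ h11 h12 a₁).2
    rw [hx] at hna1
    rw [hy] at hna1'
    omega
  have la2 : label T p.getVert p.length a₂ = i₂ := by
    have hx := (key i₂ h21 h22 a₂).1
    have hy := (key i₂ h21 h22 a₂).2
    rw [hx] at hna2
    rw [hy] at hna2'
    omega
  have lb1 : i₁ < label T p.getVert p.length b₁ := (key i₁ h11 h12 b₁).2.mp hb1
  have lb2 : i₂ < label T p.getVert p.length b₂ := (key i₂ h21 h22 b₂).2.mp hb2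
  have hee : s(a₁, b₁) = s(a₂, b₂) := he1.symm.trans he2
  rcases Sym2.eq_iff.mp hee with ⟨ha, hb⟩ | ⟨ha, hb⟩
  · rw [ha] at la1
    rw [hb] at lb1
    omega
  · rw [ha] at la1
    rw [hb] at lb1
    omega
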